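/- Let p ≥ 3 and k ≥ 1 be integers and a, b ∈ ℝ with 0 < b ≤ p-2 and k/2 + a + 1 > 0. For w > 0 define r(w) = w · [∫_0^1 λ^{b/2} (1-λ)^{p/2 - b/2 - 1} (1 + wλ)^{-k/2 - a - b/2 - 2} dλ] / [∫_0^1 λ^{b/2 - 1} (1-λ)^{p/2 - b/2 - 1} (1 + wλ)^{-k/2 - a - b/2 - 2} dλ]. Then 0 < r(w) ≤ b/(k + 2a + 2) for all w > 0. (Lemma 6.3, part 2.) -/

import Mathlib

open MeasureTheory Real

lemma rshrink_integrableOn_aux {α β γ w : ℝ} (hα : -1 < α) (hβ : -1 < β) (hw : 0 < w) :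
    IntegrableOn (fun l : ℝ => l ^ α * (1 - l) ^ β * (1 + w * l) ^ γ)
      (Set.Ioo (0:ℝ) 1) := by
  have key : ∀ x : ℝ, 0 ≤ x → 0 ≤ 1 + w * x := by
    intro x hx; nlinarith
  have h1 : IntegrableOn (fun l : ℝ => l ^ α * (1 - l) ^ β * (1 + w * l) ^ γ)
      (Set.Ioc (0:ℝ) (1/2)) := by
    have hi : IntegrableOn (fun l : ℝ => l ^ α) (Set.Ioc (0:ℝ) (1/2)) := by
      have := intervalIntegral.intervalIntegrable_rpow' (a := (0:ℝ)) (b := 1/2) hα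
      rwa [intervalIntegrable_iff_integrableOn_Ioc_of_le (by norm_num)] at this
    have hc : ContinuousOn (fun l : ℝ => (1 - l) ^ β * (1 + w * l) ^ γ)
        (Set.Icc (0:ℝ) (1/2)) := by
      apply ContinuousOn.mul
      · apply ContinuousOn.rpow_const (by fun_prop)
        intro x hx
        left
        simp only [Set.mem_Icc] at hx
        nlinarith [hx.2]
      · apply ContinuousOn.rpow_const (by fun_prop)
        intro x hx
        left
        simp only [Set.mem_Icc] at hx
        nlinarith [key x hx.1, hw, hx.1]
    have := hi.mul_continuousOn_of_subset hc measurableSet_Ioc isCompact_Icc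
      Set.Ioc_subset_Icc_self
    simpa [mul_assoc] using this
  have h2 : IntegrableOn (fun l : ℝ => l ^ α * (1 - l) ^ β * (1 + w * l) ^ γ)
      (Set.Ioc (1/2:ℝ) 1) := by
    have hi : IntegrableOn (fun l : ℝ => (1 - l) ^ β) (Set.Ioc (1/2:ℝ) 1) := by
      have h := intervalIntegral.intervalIntegrable_rpow' (a := (0:ℝ)) (b := 1/2) hβ
      have h2 := (h.comp_sub_left 1).symm
      norm_num at h2
      rwa [intervalIntegrable_iff_integrableOn_Ioc_of_le (by norm_num)] at h2
    have hc : ContinuousOn (fun l : ℝ => l ^ α * (1 + w * l) ^ γ)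
        (Set.Icc (1/2:ℝ) 1) := by
      apply ContinuousOn.mul
      · apply ContinuousOn.rpow_const (by fun_prop)
        intro x hx
        left
        simp only [Set.mem_Icc] at hx
        nlinarith [hx.1]
      · apply ContinuousOn.rpow_const (by fun_prop)
        intro x hx
        left
        simp only [Set.mem_Icc] at hx
        nlinarith [key x (by linarith [hx.1] : (0:ℝ) ≤ x)]
    have := hi.mul_continuousOn_of_subset hc measurableSet_Ioc isCompact_Icc
      Set.Ioc_subset_Icc_self
    apply this.congr_fun _ measurableSet_Ioc
    intro x hx
    ring
  have : Set.Ioo (0:ℝ) 1 ⊆ Set.Ioc (0:ℝ) (1/2) ∪ Set.Ioc (1/2:ℝ) 1 := by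
    intro x hx
    rcases le_or_gt x (1/2) with h | h
    · exact Or.inl ⟨hx.1, h⟩
    · exact Or.inr ⟨h, hx.2.le⟩
  exact (h1.union h2).mono_set this


lemma rshrink_integral_pos {α β γ w : ℝ} (hα : -1 < α) (hβ : -1 < β) (hw : 0 < w) :
    0 < ∫ l in Set.Ioo (0:ℝ) 1, l ^ α * (1 - l) ^ β * (1 + w * l) ^ γ := by
  rw [setIntegral_pos_iff_support_of_nonneg_ae ?nonneg (rshrink_integrableOn_aux hα hβ hw)]
  case nonneg =>
    filter_upwards [ae_restrict_mem measurableSet_Ioo] with x hx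
    have h1 : (0:ℝ) < x := hx.1
    have h2 : (0:ℝ) < 1 - x := by linarith [hx.2]
    have h3 : (0:ℝ) < 1 + w * x := by nlinarith
    positivity
  have hsub : Set.Ioo (0:ℝ) 1 ⊆
      Function.support (fun l : ℝ => l ^ α * (1 - l) ^ β * (1 + w * l) ^ γ) ∩
        Set.Ioo (0:ℝ) 1 := by
    intro x hx
    refine ⟨?_, hx⟩
    have h1 : (0:ℝ) < x := hx.1
    have h2 : (0:ℝ) < 1 - x := by linarith [hx.2]
    have h3 : (0:ℝ) < 1 + w * x := by nlinarith
    exact (mul_pos (mul_pos (rpow_pos_of_pos h1 α) (rpow_pos_of_pos h2 β))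
      (rpow_pos_of_pos h3 γ)).ne'
  have hv : (0:ENNReal) < volume (Set.Ioo (0:ℝ) 1) := by
    rw [Real.volume_Ioo]; norm_num
  exact hv.trans_le (measure_mono hsub)


lemma rshrink_key (p k : ℕ) (a b : ℝ)
    (hb0 : 0 < b) (hbp : b ≤ (p : ℝ) - 2) (ha : (k : ℝ) / 2 + a + 1 > 0)
    {w : ℝ} (hw : 0 < w) :
    ((k : ℝ) / 2 + a + 1) * w *
        (∫ l in Set.Ioo (0 : ℝ) 1,
          l ^ (b / 2) * (1 - l) ^ ((p : ℝ) / 2 - b / 2 - 1) *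
            (1 + w * l) ^ (-(k : ℝ) / 2 - a - b / 2 - 2)) ≤
      b / 2 * ∫ l in Set.Ioo (0 : ℝ) 1,
          l ^ (b / 2 - 1) * (1 - l) ^ ((p : ℝ) / 2 - b / 2 - 1) *
            (1 + w * l) ^ (-(k : ℝ) / 2 - a - b / 2 - 2) := by
  set q : ℝ := (p : ℝ) / 2 - b / 2 - 1 with hqdef
  set e : ℝ := -(k : ℝ) / 2 - a - b / 2 - 2 with hedef
  have hq0 : 0 ≤ q := by simp only [hqdef]; linarith
  have hb2 : (0:ℝ) < b / 2 := by linarith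
  have hm : (0:ℝ) < (k : ℝ) / 2 + a + 1 := ha
  set f₀ : ℝ → ℝ := fun l => l ^ (b / 2 - 1) * (1 - l) ^ q * (1 + w * l) ^ e with hf₀def
  set f₁ : ℝ → ℝ := fun l => l ^ (b / 2) * (1 - l) ^ q * (1 + w * l) ^ e with hf₁def
  set f₂ : ℝ → ℝ := fun l => l ^ (b / 2) * (1 - l) ^ (q - 1) * (1 + w * l) ^ (e + 1) with hf₂def
  set F : ℝ → ℝ := fun l => l ^ (b / 2) * (1 - l) ^ q * (1 + w * l) ^ (e + 1) with hFdef
  set G : ℝ → ℝ := fun l =>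
    b / 2 * f₀ l - ((k : ℝ) / 2 + a + 1) * w * f₁ l - q * f₂ l with hGdef
  -- integrability
  have hif₀ : IntegrableOn f₀ (Set.Ioo (0:ℝ) 1) :=
    rshrink_integrableOn_aux (by linarith) (by linarith) hw
  have hif₁ : IntegrableOn f₁ (Set.Ioo (0:ℝ) 1) :=
    rshrink_integrableOn_aux (by linarith) (by linarith) hw
  have hiqf₂ : IntegrableOn (fun l => q * f₂ l) (Set.Ioo (0:ℝ) 1) := by
    rcases hq0.eq_or_lt with h | h
    · simp only [← h, zero_mul]
      exact integrableOn_zero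
    · exact (rshrink_integrableOn_aux (by linarith) (by linarith) hw).const_mul q
  have hiG : IntegrableOn G (Set.Ioo (0:ℝ) 1) :=
    ((hif₀.const_mul _).sub (hif₁.const_mul _)).sub hiqf₂
  -- derivative
  have hderiv : ∀ x ∈ Set.Ioo (0:ℝ) 1, HasDerivAt F (G x) x := by
    intro x hx
    have h1x : (0:ℝ) < x := hx.1
    have h2x : (0:ℝ) < 1 - x := by linarith [hx.2]
    have h3x : (0:ℝ) < 1 + w * x := by nlinarith
    have h1 : HasDerivAt (fun l : ℝ => l ^ (b / 2)) (b / 2 * x ^ (b / 2 - 1)) x :=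
      Real.hasDerivAt_rpow_const (Or.inl h1x.ne')
    have h2 : HasDerivAt (fun l : ℝ => (1 - l) ^ q) (-1 * q * (1 - x) ^ (q - 1)) x := by
      have hin : HasDerivAt (fun l : ℝ => 1 - l) (-1) x := by
        simpa using (hasDerivAt_id x).const_sub 1
      exact hin.rpow_const (Or.inl h2x.ne')
    have h3 : HasDerivAt (fun l : ℝ => (1 + w * l) ^ (e + 1))
        (w * (e + 1) * (1 + w * x) ^ e) x := by
      have hin : HasDerivAt (fun l : ℝ => 1 + w * l) w x := by
        simpa using ((hasDerivAt_id x).const_mul w).const_add 1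
      have := hin.rpow_const (p := e + 1) (Or.inl h3x.ne')
      simpa [add_sub_cancel_right] using this
    have hd : HasDerivAt F _ x := (h1.mul h2).mul h3
    convert hd using 1
    simp only [hGdef, hf₀def, hf₁def, hf₂def, Pi.mul_apply]
    have e1 : x ^ (b / 2) = x ^ (b / 2 - 1) * x := by
      rw [← Real.rpow_add_one h1x.ne' (b / 2 - 1)]; ring_nf
    have e2 : (1 - x) ^ q = (1 - x) ^ (q - 1) * (1 - x) := by
      rw [← Real.rpow_add_one h2x.ne' (q - 1)]; ring_nf
    have e3 : (1 + w * x) ^ (e + 1) = (1 + w * x) ^ e * (1 + w * x) := by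
      rw [Real.rpow_add_one h3x.ne' e]
    rw [e1, e2, e3]
    ring
  -- limits at endpoints
  have hF0 : Filter.Tendsto F (nhdsWithin 0 (Set.Ioi 0)) (nhds 0) := by
    have hc : ContinuousAt F 0 := by
      apply ContinuousAt.mul
      apply ContinuousAt.mul
      · exact Real.continuousAt_rpow_const 0 _ (Or.inr hb2.le)
      · exact (continuousAt_const.sub continuousAt_id).rpow_const (Or.inl (by norm_num))
      · exact (continuousAt_const.add (continuousAt_const.mul continuousAt_id)).rpow_const
          (Or.inl (by norm_num))
    have h := hc.tendsto.mono_left (nhdsWithin_le_nhds (s := Set.Ioi (0:ℝ)))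
    have hF0v : F 0 = 0 := by
      simp [hFdef, Real.zero_rpow hb2.ne']
    rwa [hF0v] at h
  set F1 : ℝ := (0:ℝ) ^ q * (1 + w) ^ (e + 1) with hF1def
  have hF1nn : 0 ≤ F1 := mul_nonneg (Real.rpow_nonneg le_rfl _)
    (Real.rpow_nonneg (by linarith) _)
  have hF1 : Filter.Tendsto F (nhdsWithin 1 (Set.Iio 1)) (nhds F1) := by
    have hc : ContinuousAt F 1 := by
      apply ContinuousAt.mul
      apply ContinuousAt.mul
      · exact Real.continuousAt_rpow_const 1 _ (Or.inl (by norm_num))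
      · exact (continuousAt_const.sub continuousAt_id).rpow_const (Or.inr hq0)
      · exact (continuousAt_const.add (continuousAt_const.mul continuousAt_id)).rpow_const
          (Or.inl (by intro h; simp only [Pi.add_apply, Pi.mul_apply, id_eq] at h; nlinarith))
    have h := hc.tendsto.mono_left (nhdsWithin_le_nhds (s := Set.Iio (1:ℝ)))
    have hF1v : F 1 = F1 := by
      simp [hFdef, hF1def]
    rwa [hF1v] at h
  -- FTC
  have hint : IntervalIntegrable G volume 0 1 := by
    rw [intervalIntegrable_iff_integrableOn_Ioo_of_le (by norm_num)]
    exact hiG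
  have key : ∫ x in (0:ℝ)..1, G x = F1 - 0 :=
    intervalIntegral.integral_eq_sub_of_hasDerivAt_of_tendsto (by norm_num) hderiv hint hF0 hF1
  rw [intervalIntegral.integral_of_le (by norm_num : (0:ℝ) ≤ 1),
    integral_Ioc_eq_integral_Ioo] at key
  have hsplit : ∫ x in Set.Ioo (0:ℝ) 1, G x =
      b / 2 * (∫ l in Set.Ioo (0:ℝ) 1, f₀ l) -
        ((k : ℝ) / 2 + a + 1) * w * (∫ l in Set.Ioo (0:ℝ) 1, f₁ l) -
        ∫ l in Set.Ioo (0:ℝ) 1, q * f₂ l := by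
    simp only [hGdef]
    have hA : IntegrableOn (fun l => b / 2 * f₀ l) (Set.Ioo (0:ℝ) 1) := hif₀.const_mul _
    have hB : IntegrableOn (fun l => ((k : ℝ) / 2 + a + 1) * w * f₁ l) (Set.Ioo (0:ℝ) 1) :=
      hif₁.const_mul _
    have hAB : IntegrableOn
        (fun l => b / 2 * f₀ l - ((k : ℝ) / 2 + a + 1) * w * f₁ l) (Set.Ioo (0:ℝ) 1) :=
      hA.sub hB
    rw [integral_sub hAB hiqf₂, integral_sub hA hB,
      integral_const_mul, integral_const_mul]
  have hJnn : 0 ≤ ∫ l in Set.Ioo (0:ℝ) 1, q * f₂ l := by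
    apply setIntegral_nonneg measurableSet_Ioo
    intro x hx
    have h2x : (0:ℝ) ≤ 1 - x := by linarith [hx.2]
    have h3x : (0:ℝ) ≤ 1 + w * x := by nlinarith [hx.1]
    exact mul_nonneg hq0 (mul_nonneg (mul_nonneg (Real.rpow_nonneg hx.1.le _)
      (Real.rpow_nonneg h2x _)) (Real.rpow_nonneg h3x _))
  rw [hsplit] at key
  linarith [key, hJnn, hF1nn]

/-- The shrinkage factor `r(w)` of the generalized Bayes estimator `(1 - r(W)/W)X`,
`W = ‖X‖²/‖U‖²`, corresponding to the prior with density proportional to `η^a ‖θ‖^{-b}`: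
`r(w) = w ⬝ [∫₀¹ λ^{b/2} (1-λ)^{p/2-b/2-1} (1+wλ)^{-k/2-a-b/2-2} dλ] /
  [∫₀¹ λ^{b/2-1} (1-λ)^{p/2-b/2-1} (1+wλ)^{-k/2-a-b/2-2} dλ]`. -/
noncomputable def rshrink (p k : ℕ) (a b : ℝ) (w : ℝ) : ℝ :=
  w * (∫ l in Set.Ioo (0 : ℝ) 1,
        l ^ (b / 2) * (1 - l) ^ ((p : ℝ) / 2 - b / 2 - 1) *
          (1 + w * l) ^ (-(k : ℝ) / 2 - a - b / 2 - 2)) /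
    ∫ l in Set.Ioo (0 : ℝ) 1,
      l ^ (b / 2 - 1) * (1 - l) ^ ((p : ℝ) / 2 - b / 2 - 1) *
        (1 + w * l) ^ (-(k : ℝ) / 2 - a - b / 2 - 2)

/-- **Lemma 6.3, part 2**: for `0 < b ≤ p - 2` and `k/2 + a + 1 > 0`, the shrinkage factor
`r` satisfies `0 < r(w) ≤ b/(k + 2a + 2)` for all `w > 0`. -/
theorem rshrink_bounds (p k : ℕ) (hp : 3 ≤ p) (hk : 1 ≤ k) (a b : ℝ)
    (hb0 : 0 < b) (hbp : b ≤ (p : ℝ) - 2) (ha : (k : ℝ) / 2 + a + 1 > 0) :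
    ∀ w : ℝ, 0 < w →
      0 < rshrink p k a b w ∧ rshrink p k a b w ≤ b / ((k : ℝ) + 2 * a + 2) := by
  intro w hw
  have hq : (-1:ℝ) < (p : ℝ) / 2 - b / 2 - 1 := by linarith
  have hI1 : 0 < ∫ l in Set.Ioo (0 : ℝ) 1,
      l ^ (b / 2) * (1 - l) ^ ((p : ℝ) / 2 - b / 2 - 1) *
        (1 + w * l) ^ (-(k : ℝ) / 2 - a - b / 2 - 2) :=
    rshrink_integral_pos (by linarith) hq hw
  have hI0 : 0 < ∫ l in Set.Ioo (0 : ℝ) 1,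
      l ^ (b / 2 - 1) * (1 - l) ^ ((p : ℝ) / 2 - b / 2 - 1) *
        (1 + w * l) ^ (-(k : ℝ) / 2 - a - b / 2 - 2) :=
    rshrink_integral_pos (by linarith) hq hw
  have hkey := rshrink_key p k a b hb0 hbp ha hw
  constructor
  · unfold rshrink
    positivity
  · unfold rshrink
    have hden : (0:ℝ) < (k : ℝ) + 2 * a + 2 := by linarith
    rw [div_le_div_iff₀ hI0 hden]
    nlinarith [hkey, hI0, hI1]
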